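/- arXiv:2209.06003 — 2 statements merged into one kernel-verified Lean document; each statement's English description precedes it below -/
import Mathlib

section
/- Let 0 < p⃗, θ ≤ ∞ and let w be a non-negative measurable function on (0,∞). If ‖w‖_{L^θ(t,∞)} = ∞ for every t > 0, then the local mixed Morrey-type space LM_{p⃗θ,w}(ℝ^n) contains only functions equivalent to 0 on ℝ^n (i.e. ‖f‖_{LM_{p⃗θ,w}} < ∞ forces f = 0 almost everywhere). -/
open MeasureTheory ENNReal NNReal Set Filter

noncomputable section

namespace LMM

/-- `L^p` "norm" (with the usual `essSup` convention for `p = ∞`)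
of an `ℝ≥0∞`-valued function on `ℝ` with respect to a measure `μ`. -/
def lpNormE (p : ℝ≥0∞) (g : ℝ → ℝ≥0∞) (μ : Measure ℝ) : ℝ≥0∞ :=
  if p = ∞ then essSup g μ else (∫⁻ t, g t ^ p.toReal ∂μ) ^ (1 / p.toReal)

/-- Iterated mixed Lebesgue norm of an `ℝ≥0∞`-valued function on `ℝ^n`:
the innermost integration is in the variable `x 1` with exponent `p 1`,
the outermost in `x n` with exponent `p n`. -/
def mixedNorm : (n : ℕ) → (Fin n → ℝ≥0∞) → ((Fin n → ℝ) → ℝ≥0∞) → ℝ≥0∞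
  | 0, _, g => g finZeroElim
  | (n + 1), p, g =>
      lpNormE (p (Fin.last n))
        (fun t => mixedNorm n (fun i => p i.castSucc) (fun x => g (Fin.snoc x t)))
        volume

/-- Mixed Lebesgue norm of `g` restricted to a set `S`. -/
def mixedNormOn (n : ℕ) (p : Fin n → ℝ≥0∞) (g : (Fin n → ℝ) → ℝ≥0∞)
    (S : Set (Fin n → ℝ)) : ℝ≥0∞ :=
  mixedNorm n p (S.indicator g)

/-- The (closed) cube centered at `c` with side length `2 * r`. -/
def cubeAt {n : ℕ} (c : Fin n → ℝ) (r : ℝ) : Set (Fin n → ℝ) := {x | ∀ i, |x i - c i| ≤ r}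

/-- The cube `Q(0, r)` centered at the origin with side length `2 * r`. -/
def cube0 (n : ℕ) (r : ℝ) : Set (Fin n → ℝ) := cubeAt 0 r

/-- Euclidean norm on `Fin n → ℝ`. -/
def euclNorm {n : ℕ} (x : Fin n → ℝ) : ℝ := Real.sqrt (∑ i, x i ^ 2)

/-- The closed Euclidean ball of radius `r` centered at the origin. -/
def closedBall0 (n : ℕ) (r : ℝ) : Set (Fin n → ℝ) := {x | euclNorm x ≤ r}

/-- The local mixed Morrey-type quasi-norm `‖·‖_{LM_{p θ, w}}` of an
`ℝ≥0∞`-valued function. -/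
def LMnormE (n : ℕ) (p : Fin n → ℝ≥0∞) (θ : ℝ≥0∞) (w : ℝ → ℝ)
    (g : (Fin n → ℝ) → ℝ≥0∞) : ℝ≥0∞ :=
  lpNormE θ (fun r => ENNReal.ofReal (w r) * mixedNormOn n p g (cube0 n r))
    (volume.restrict (Ioi (0 : ℝ)))

/-- The local mixed Morrey-type quasi-norm of a real-valued function. -/
def LMnorm (n : ℕ) (p : Fin n → ℝ≥0∞) (θ : ℝ≥0∞) (w : ℝ → ℝ)
    (f : (Fin n → ℝ) → ℝ) : ℝ≥0∞ :=
  LMnormE n p θ w (fun x => (‖f x‖₊ : ℝ≥0∞))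

/-- `1/p₁ + ⋯ + 1/pₙ`. -/
def sumInv {n : ℕ} (p : Fin n → ℝ≥0∞) : ℝ := ∑ i, ((p i)⁻¹).toReal

/-- Hardy–Littlewood maximal operator (over cubes) of an `ℝ≥0∞`-valued function. -/
def maximalE {n : ℕ} (g : (Fin n → ℝ) → ℝ≥0∞) (x : Fin n → ℝ) : ℝ≥0∞ :=
  ⨆ (c : Fin n → ℝ) (r : ℝ) (_ : 0 < r) (_ : x ∈ cubeAt c r),
    (volume (cubeAt c r))⁻¹ * ∫⁻ y in cubeAt c r, g y

/-- Hardy–Littlewood maximal operator of a real-valued function. -/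
def maximal {n : ℕ} (f : (Fin n → ℝ) → ℝ) : (Fin n → ℝ) → ℝ≥0∞ :=
  maximalE (fun y => (‖f y‖₊ : ℝ≥0∞))

/-- Weighted `L^θ` norm `‖v · g‖_{L^θ(0,∞)}` of an `ℝ≥0∞`-valued function. -/
def wLpE (θ : ℝ≥0∞) (v : ℝ → ℝ) (g : ℝ → ℝ≥0∞) : ℝ≥0∞ :=
  lpNormE θ (fun r => ENNReal.ofReal (v r) * g r) (volume.restrict (Ioi (0 : ℝ)))

/-- The dual Hardy operator `H* g (r) = ∫_r^∞ g`. -/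
def dualHardyE (g : ℝ → ℝ≥0∞) (r : ℝ) : ℝ≥0∞ := ∫⁻ t in Ioi r, g t

/-- The Hardy operator `H g (r) = ∫_0^r g`. -/
def hardyE (g : ℝ → ℝ≥0∞) (r : ℝ) : ℝ≥0∞ := ∫⁻ t in Ioo 0 r, g t

/-- The weight `v̂₁(r) = r^{-(1/p₁+⋯+1/pₙ)-1} w(r)`. -/
def vhat1 {n : ℕ} (p : Fin n → ℝ≥0∞) (w : ℝ → ℝ) (r : ℝ) : ℝ :=
  r ^ (-(sumInv p) - 1) * w r

/-- The weight `v̂₂(r) = r^{-(1/p₁+⋯+1/pₙ)} w(r)`. -/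
def vhat2 {n : ℕ} (p : Fin n → ℝ≥0∞) (w : ℝ → ℝ) (r : ℝ) : ℝ :=
  r ^ (-(sumInv p)) * w r

/-- Boundedness of the dual Hardy operator `H*` from `L_{θ,v₁}(0,∞)` to `L_{θ,v₂}(0,∞)`. -/
def DualHardyBounded (θ : ℝ≥0∞) (v1 v2 : ℝ → ℝ) : Prop :=
  ∃ C : ℝ≥0, ∀ g : ℝ → ℝ≥0∞, Measurable g → wLpE θ v2 (dualHardyE g) ≤ C * wLpE θ v1 g

/-- Boundedness of the Hardy operator `H` from `L_{θ,v₁}(0,∞)` to `L_{θ,v₂}(0,∞)`. -/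
def HardyBounded (θ : ℝ≥0∞) (v1 v2 : ℝ → ℝ) : Prop :=
  ∃ C : ℝ≥0, ∀ g : ℝ → ℝ≥0∞, Measurable g → wLpE θ v2 (hardyE g) ≤ C * wLpE θ v1 g

/-- The class `Ω_θ`. -/
def OmegaTheta (θ : ℝ≥0∞) (w : ℝ → ℝ) : Prop :=
  Measurable w ∧ (∀ r, 0 ≤ w r) ∧
    ¬ (∀ᵐ r ∂(volume.restrict (Ioi (0 : ℝ))), w r = 0) ∧
    ∃ t > (0 : ℝ), lpNormE θ (fun r => ENNReal.ofReal (w r)) (volume.restrict (Ioi t)) < ∞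

/-- The class `Ω_{p,θ}`. -/
def OmegaPTheta {n : ℕ} (p : Fin n → ℝ≥0∞) (θ : ℝ≥0∞) (w : ℝ → ℝ) : Prop :=
  Measurable w ∧ (∀ r, 0 ≤ w r) ∧
    ¬ (∀ᵐ r ∂(volume.restrict (Ioi (0 : ℝ))), w r = 0) ∧
    (∃ t > (0 : ℝ), lpNormE θ (fun r => ENNReal.ofReal (w r)) (volume.restrict (Ioi t)) < ∞) ∧
    (∃ t > (0 : ℝ), lpNormE θ (fun r => ENNReal.ofReal (w r * r ^ sumInv p))
        (volume.restrict (Ioo (0 : ℝ) t)) < ∞)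

/-- The doubling condition `C⁻¹ w(r) ≤ w(2r) ≤ C w(r)` for all `r > 0`. -/
def Doubling (w : ℝ → ℝ) : Prop :=
  ∃ C : ℝ, 0 < C ∧ ∀ r > (0 : ℝ), C⁻¹ * w r ≤ w (2 * r) ∧ w (2 * r) ≤ C * w r

/-- Conjugate exponent in `ℝ≥0∞`. -/
def conjE (p : ℝ≥0∞) : ℝ≥0∞ := (1 - p⁻¹)⁻¹

/-- `A` is a `(p', w, R)`-block: supported in `Q(0,R)` with `‖A‖_{L^{p'}} ≤ w(R)`. -/
def IsBlock {n : ℕ} (p' : Fin n → ℝ≥0∞) (w : ℝ → ℝ) (R : ℝ)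
    (A : (Fin n → ℝ) → ℝ) : Prop :=
  Measurable A ∧ (∀ x ∉ cube0 n R, A x = 0) ∧
    mixedNorm n p' (fun x => (‖A x‖₊ : ℝ≥0∞)) ≤ ENNReal.ofReal (w R)

/-- `ℓ^q` norm of a `ℤ`-indexed real sequence. -/
def ellNorm (q : ℝ≥0∞) (a : ℤ → ℝ) : ℝ≥0∞ :=
  if q = ∞ then ⨆ j, (‖a j‖₊ : ℝ≥0∞)
  else (∑' j, (‖a j‖₊ : ℝ≥0∞) ^ q.toReal) ^ (1 / q.toReal)

/-- Membership in the local block space `LH_{p' θ', w}`. -/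
def MemLH {n : ℕ} (p' : Fin n → ℝ≥0∞) (θ' : ℝ≥0∞) (w : ℝ → ℝ)
    (g : (Fin n → ℝ) → ℝ) : Prop :=
  ∃ (lam : ℤ → ℝ) (A : ℤ → (Fin n → ℝ) → ℝ),
    (∀ j, IsBlock p' w ((2 : ℝ) ^ j) (A j)) ∧
    (∀ᵐ x, HasSum (fun j => lam j * A j x) (g x)) ∧ ellNorm θ' lam < ∞

/-- The local block space norm `‖g‖_{LH_{p' θ', w}}`. -/
def LHnorm {n : ℕ} (p' : Fin n → ℝ≥0∞) (θ' : ℝ≥0∞) (w : ℝ → ℝ)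
    (g : (Fin n → ℝ) → ℝ) : ℝ≥0∞ :=
  ⨅ (lam : ℤ → ℝ) (A : ℤ → (Fin n → ℝ) → ℝ)
    (_ : (∀ j, IsBlock p' w ((2 : ℝ) ^ j) (A j)) ∧
         ∀ᵐ x, HasSum (fun j => lam j * A j x) (g x)),
    ellNorm θ' lam

/-- `(∫_0^∞ (r^{-λ} A(r))^q dr/r)^{1/q}` (essential supremum when `q = ∞`). -/
def morreyScale (q : ℝ≥0∞) (lam : ℝ) (A : ℝ → ℝ≥0∞) : ℝ≥0∞ :=
  if q = ∞ then essSup (fun r => ENNReal.ofReal (r ^ (-lam)) * A r) (volume.restrict (Ioi (0 : ℝ)))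
  else (∫⁻ r in Ioi (0 : ℝ),
      (ENNReal.ofReal (r ^ (-lam)) * A r) ^ q.toReal * ENNReal.ofReal r⁻¹) ^ (1 / q.toReal)

/-- The local mixed Morrey norm `‖·‖_{LM^λ_{p,q}}` (cubes `Q(0,r)`). -/
def LMlamQ (n : ℕ) (p : Fin n → ℝ≥0∞) (q : ℝ≥0∞) (lam : ℝ)
    (g : (Fin n → ℝ) → ℝ≥0∞) : ℝ≥0∞ :=
  morreyScale q lam (fun r => mixedNormOn n p g (cube0 n r))

/-- The local mixed Morrey norm `‖·‖_{LM^λ_{p,q}}` (balls `B(0,r)`). -/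
def LMlamB (n : ℕ) (p : Fin n → ℝ≥0∞) (q : ℝ≥0∞) (lam : ℝ)
    (g : (Fin n → ℝ) → ℝ≥0∞) : ℝ≥0∞ :=
  morreyScale q lam (fun r => mixedNormOn n p g (closedBall0 n r))

/-- Condition (★) on the auxiliary exponent vector `s`. -/
def StarCond {n : ℕ} (p s : Fin n → ℝ≥0∞) (w : ℝ → ℝ) : Prop :=
  ∃ C : ℝ, ∀ r : ℝ, 0 < r →
    (∫⁻ t in Ioi r,
        ENNReal.ofReal (t ^ (sumInv s / (n : ℝ) - sumInv p / (n : ℝ) - 1) / w (r * t)))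
      ≤ ENNReal.ofReal (C * (r ^ (sumInv p / (n : ℝ) - sumInv s / (n : ℝ)) / w r))

/-- `ℓ^u`-norm (`sup` for `u = ∞`) of an `ℕ`-indexed family in `ℝ≥0∞`. -/
def vecNorm (u : ℝ≥0∞) (a : ℕ → ℝ≥0∞) : ℝ≥0∞ :=
  if u = ∞ then ⨆ j, a j else (∑' j, a j ^ u.toReal) ^ (1 / u.toReal)

/-- Operator norm of the functional `g ↦ ∫ f g` on the local block space. -/
def dualNormOf (n : ℕ) (p : Fin n → ℝ≥0∞) (θ : ℝ≥0∞) (w : ℝ → ℝ)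
    (f : (Fin n → ℝ) → ℝ) : ℝ≥0∞ :=
  ⨆ (g : (Fin n → ℝ) → ℝ) (_ : MemLH (fun i => conjE (p i)) (conjE θ) w g)
    (_ : LHnorm (fun i => conjE (p i)) (conjE θ) w g ≤ 1),
    ENNReal.ofReal |∫ x, f x * g x|

/-- `sup_{t>0} |e^{tΔ}f(x)|` for a (locally integrable) function `f`. -/
def heatSup (n : ℕ) (f : (Fin n → ℝ) → ℝ) (x : Fin n → ℝ) : ℝ≥0∞ :=
  ⨆ (t : ℝ) (_ : 0 < t),
    ENNReal.ofReal
      |∫ y, (4 * Real.pi * t) ^ (-(n : ℝ) / 2) *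
          Real.exp (-(∑ i, (x i - y i) ^ 2) / (4 * t)) * f y|

/-- The Schwartz seminorm `ρ_N`. -/
def rhoN {n : ℕ} (N : ℕ) (φ : SchwartzMap (Fin n → ℝ) ℝ) : ℝ≥0∞ :=
  ∑ k ∈ Finset.range (N + 1),
    ⨆ x : Fin n → ℝ, ENNReal.ofReal ((1 + euclNorm x) ^ N * ‖iteratedFDeriv ℝ k (⇑φ) x‖)

/-- The grand maximal operator of a (locally integrable) function. -/
def grandMaxF {n : ℕ} (N : ℕ) (f : (Fin n → ℝ) → ℝ) (x : Fin n → ℝ) : ℝ≥0∞ :=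
  ⨆ (φ : SchwartzMap (Fin n → ℝ) ℝ) (_ : rhoN N φ ≤ 1) (t : ℝ) (_ : 0 < t),
    ENNReal.ofReal |∫ y, t ^ (-(n : ℝ)) * φ (fun i => (x i - y i) / t) * f y|

/-- The `n`-dimensional Hardy operator `Hf(x) = |x|^{-n} ∫_{|y|<|x|} f(y) dy`. -/
def hardyOp {n : ℕ} (f : (Fin n → ℝ) → ℝ) (x : Fin n → ℝ) : ℝ :=
  (euclNorm x) ^ (-(n : ℝ)) * ∫ y in {y : Fin n → ℝ | euclNorm y < euclNorm x}, f y

end LMM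

namespace LMM

-- ## helper lemmas

lemma cube0_eq (n : ℕ) (t : ℝ) :
    cube0 n t = Set.pi Set.univ (fun _ : Fin n => Icc (-t) t) := by
  ext x
  simp only [cube0, cubeAt, Set.mem_setOf_eq, Pi.zero_apply, sub_zero, Set.mem_univ_pi,
    Set.mem_Icc, abs_le]

lemma measurableSet_cube0 (n : ℕ) (t : ℝ) : MeasurableSet (cube0 n t) := by
  rw [cube0_eq]; exact MeasurableSet.univ_pi fun _ => measurableSet_Icc

lemma volume_cube0 (n : ℕ) {t : ℝ} (ht : 0 ≤ t) :
    volume (cube0 n t) = ENNReal.ofReal (2 * t) ^ n := by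
  rw [cube0_eq, volume_pi_pi]
  simp [Real.volume_Icc, two_mul]

lemma lpNormE_mono_ae {q : ℝ≥0∞} {μ : Measure ℝ} {h₁ h₂ : ℝ → ℝ≥0∞}
    (h : h₁ ≤ᵐ[μ] h₂) : lpNormE q h₁ μ ≤ lpNormE q h₂ μ := by
  unfold lpNormE
  split
  · exact essSup_mono_ae h
  · refine ENNReal.rpow_le_rpow ?_ (by positivity)
    refine lintegral_mono_ae (h.mono fun x hx => ?_)
    exact ENNReal.rpow_le_rpow hx ENNReal.toReal_nonneg

lemma lpNormE_mono_measure {q : ℝ≥0∞} {μ ν : Measure ℝ} (hμν : μ ≤ ν) (h : ℝ → ℝ≥0∞) :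
    lpNormE q h μ ≤ lpNormE q h ν := by
  unfold lpNormE
  split
  · exact essSup_mono_measure (Measure.absolutelyContinuous_of_le hμν)
  · exact ENNReal.rpow_le_rpow (lintegral_mono' hμν le_rfl) (by positivity)

def psiAux (q : ℝ≥0∞) (s m : ℝ≥0∞) : ℝ≥0∞ :=
  if q = ∞ then (if m = 0 then 0 else s) else s * m ^ (1 / q.toReal)

lemma psiAux_mono {q : ℝ≥0∞} {s s' m m' : ℝ≥0∞} (hs : s ≤ s') (hm : m ≤ m') :
    psiAux q s m ≤ psiAux q s' m' := by
  unfold psiAux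
  split
  · split
    · exact zero_le
    · rw [if_neg (fun h => by simp [h, le_zero_iff.mp (h ▸ hm)] at *)]
      exact hs
  · exact mul_le_mul' hs (ENNReal.rpow_le_rpow hm (by positivity))

lemma psiAux_pos {q s m : ℝ≥0∞} (hq : 0 < q) (hs : 0 < s) (hm : 0 < m) :
    0 < psiAux q s m := by
  unfold psiAux
  split
  · rw [if_neg hm.ne']; exact hs
  · rename_i hqt
    have hc : 0 < 1 / q.toReal := by
      have := ENNReal.toReal_pos hq.ne' hqt
      positivity
    refine ENNReal.mul_pos hs.ne' ?_
    simp [ENNReal.rpow_eq_zero_iff, hm.ne', hc, hc.le, not_lt]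

lemma psiAux_zero {q s : ℝ≥0∞} (hq : 0 < q) : psiAux q s 0 = 0 := by
  unfold psiAux
  split
  · simp
  · rename_i hqt
    have hc : 0 < 1 / q.toReal := by
      have := ENNReal.toReal_pos hq.ne' hqt
      positivity
    rw [ENNReal.zero_rpow_of_pos hc, mul_zero]

lemma psiAux_le_lpNormE {q : ℝ≥0∞} (hq : 0 < q) (μ : Measure ℝ) {h : ℝ → ℝ≥0∞}
    {s : ℝ≥0∞} {T : Set ℝ} (hT : MeasurableSet T) (hsh : ∀ x ∈ T, s ≤ h x) :
    psiAux q s (μ T) ≤ lpNormE q h μ := by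
  unfold psiAux lpNormE
  split
  · split
    · exact zero_le
    · rename_i hμT
      by_contra hlt
      push_neg at hlt
      have hae := _root_.ae_le_essSup (f := h) (μ := μ)
      have : T ⊆ {x | ¬ h x ≤ essSup h μ} := fun x hx => by
        simp only [Set.mem_setOf_eq, not_le]
        exact lt_of_lt_of_le hlt (hsh x hx)
      exact hμT (measure_mono_null this (ae_iff.mp hae))
  · rename_i hqt
    have hc : 0 < q.toReal := ENNReal.toReal_pos hq.ne' hqt
    have h1 : s ^ q.toReal * μ T ≤ ∫⁻ t, h t ^ q.toReal ∂μ := by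
      rw [← lintegral_indicator_const hT]
      refine lintegral_mono fun x => ?_
      by_cases hx : x ∈ T
      · simp only [Set.indicator_of_mem hx]
        exact ENNReal.rpow_le_rpow (hsh x hx) hc.le
      · simp [Set.indicator_of_notMem hx]
    calc s * μ T ^ (1 / q.toReal) = (s ^ q.toReal * μ T) ^ (1 / q.toReal) := by
          rw [ENNReal.mul_rpow_of_nonneg _ _ (by positivity), ← ENNReal.rpow_mul,
            mul_one_div, div_self hc.ne', ENNReal.rpow_one]
      _ ≤ _ := ENNReal.rpow_le_rpow h1 (by positivity)

end LMM

namespace LMM2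
open LMM

variable {n : ℕ}

def eLast (n : ℕ) : ((Fin (n+1)) → ℝ) ≃ᵐ ℝ × (Fin n → ℝ) :=
  MeasurableEquiv.piFinSuccAbove (fun _ : Fin (n+1) => ℝ) (Fin.last n)

lemma eLast_symm_apply (z : ℝ × (Fin n → ℝ)) : (eLast n).symm z = Fin.snoc z.2 z.1 := by
  show (Fin.insertNthEquiv (fun _ : Fin (n+1) => ℝ) (Fin.last n)) z = _
  simp [Fin.insertNthEquiv_last, Fin.snocEquiv]

lemma mp_eLast :
    MeasurePreserving ((eLast n).symm)
      ((volume : Measure ℝ).prod (volume : Measure (Fin n → ℝ))) volume :=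
  (MeasureTheory.volume_preserving_piFinSuccAbove (fun _ : Fin (n+1) => ℝ) (Fin.last n)).symm

lemma ae_snoc_of_ae {P : (Fin (n+1) → ℝ) → Prop} (h : ∀ᵐ y, P y) :
    ∀ᵐ t : ℝ, ∀ᵐ x : Fin n → ℝ, P (Fin.snoc x t) := by
  have h2 : ∀ᵐ z : ℝ × (Fin n → ℝ) ∂((volume : Measure ℝ).prod volume), P ((eLast n).symm z) :=
    (mp_eLast (n := n)).quasiMeasurePreserving.ae h
  have h3 := MeasureTheory.Measure.ae_ae_of_ae_prod h2
  filter_upwards [h3] with t ht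
  filter_upwards [ht] with x hx
  rwa [eLast_symm_apply] at hx

lemma lintegral_snoc {g : (Fin (n+1) → ℝ) → ℝ≥0∞} (hg : Measurable g) :
    ∫⁻ y, g y = ∫⁻ t : ℝ, ∫⁻ x : Fin n → ℝ, g (Fin.snoc x t) := by
  rw [← (mp_eLast (n := n)).lintegral_comp hg]
  rw [MeasureTheory.lintegral_prod (fun z => g ((eLast n).symm z))
    ((hg.comp (eLast n).symm.measurable).aemeasurable)]
  simp only [Function.comp, eLast_symm_apply]

lemma measurable_snoc_fst {t : ℝ} : Measurable (fun x : Fin n → ℝ => (Fin.snoc x t : Fin (n+1) → ℝ)) := by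
  refine measurable_pi_lambda _ fun i => ?_
  refine Fin.lastCases ?_ (fun j => ?_) i
  · simpa using measurable_const
  · simpa using measurable_pi_apply j

end LMM2

namespace LMM3
open LMM LMM2

lemma volume_univ_fin_zero : (volume : Measure (Fin 0 → ℝ)) Set.univ = 1 := by
  have h := volume_cube0 0 (t := 1) (by norm_num)
  have he : cube0 0 1 = Set.univ := by
    ext x; simp [cube0, cubeAt]
  rw [he] at h; simpa using h

lemma of_ae_fin_zero {P : (Fin 0 → ℝ) → Prop} (h : ∀ᵐ x, P x) (x : Fin 0 → ℝ) : P x := by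
  by_contra hx
  have hset : {y : Fin 0 → ℝ | ¬ P y} = Set.univ := by
    ext y; simpa [Subsingleton.elim y x] using hx
  have h0 := ae_iff.mp h
  rw [hset, volume_univ_fin_zero] at h0
  simp at h0

lemma mixedNorm_mono_ae : ∀ (n : ℕ) (p : Fin n → ℝ≥0∞) {g₁ g₂ : (Fin n → ℝ) → ℝ≥0∞},
    g₁ ≤ᵐ[volume] g₂ → mixedNorm n p g₁ ≤ mixedNorm n p g₂
  | 0, p, g₁, g₂, h => by
      simpa [mixedNorm] using of_ae_fin_zero h finZeroElim
  | (n+1), p, g₁, g₂, h => by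
      simp only [mixedNorm]
      refine lpNormE_mono_ae ?_
      filter_upwards [ae_snoc_of_ae h] with t ht
      exact mixedNorm_mono_ae n _ ht

lemma snoc_mem_cube {n : ℕ} {x : Fin n → ℝ} {t' t : ℝ} :
    (Fin.snoc x t' : Fin (n+1) → ℝ) ∈ cube0 (n+1) t ↔ x ∈ cube0 n t ∧ |t'| ≤ t := by
  simp only [cube0, cubeAt, Set.mem_setOf_eq, Pi.zero_apply, sub_zero]
  constructor
  · intro h
    exact ⟨fun i => by simpa using h i.castSucc, by simpa using h (Fin.last n)⟩
  · rintro ⟨h1, h2⟩ i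
    refine Fin.lastCases ?_ (fun j => ?_) i
    · simpa
    · simpa using h1 j

lemma key (t : ℝ) (ht : 0 < t) : ∀ (n : ℕ) (p : Fin n → ℝ≥0∞), (∀ i, 0 < p i) →
    ∃ Φ : ℝ≥0∞ → ℝ≥0∞, Monotone Φ ∧ (∀ a, 0 < a → 0 < Φ a) ∧
      ∀ g : (Fin n → ℝ) → ℝ≥0∞, Measurable g → (∀ x, g x ≤ 1) →
        (∀ x, x ∉ cube0 n t → g x = 0) → Φ (∫⁻ x, g x) ≤ mixedNorm n p g := by
  intro n
  induction n with
  | zero =>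
    intro p _
    refine ⟨fun a => min a 1, fun a b hab => min_le_min hab le_rfl,
      fun a ha => lt_min ha one_pos, fun g hg hg1 hg0 => ?_⟩
    have : ∫⁻ x, g x = g default := by
      rw [MeasureTheory.lintegral_unique, volume_univ_fin_zero, mul_one]
      exact congrArg g (Subsingleton.elim _ _)
    rw [this]
    have h2 : mixedNorm 0 p g = g default := by
      simp only [mixedNorm]
      exact congrArg g (Subsingleton.elim _ _)
    rw [h2]
    exact min_le_left _ _
  | succ n ih =>
    intro p hp
    obtain ⟨Φn, hmono, hpos, hΦ⟩ := ih (fun i => p i.castSucc) (fun i => hp _)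
    set q := p (Fin.last n) with hqdef
    have hq : 0 < q := hp _
    set L : ℝ≥0∞ := ENNReal.ofReal (2 * t) with hLdef
    have hL0 : L ≠ 0 := by simp [hLdef, ENNReal.ofReal_eq_zero]; linarith
    have hLtop : L ≠ ∞ := ENNReal.ofReal_ne_top
    set V : ℝ≥0∞ := volume (cube0 n t) with hVdef
    have hVeq : V = L ^ n := volume_cube0 n ht.le
    have hV0 : V ≠ 0 := by rw [hVeq]; exact pow_ne_zero _ hL0
    have hVtop : V ≠ ∞ := by rw [hVeq]; exact ENNReal.pow_ne_top hLtop
    refine ⟨fun a => psiAux q (Φn (a / (2 * L))) (a / 2 / V), ?_, ?_, ?_⟩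
    · intro a b hab
      exact psiAux_mono (hmono (ENNReal.div_le_div_right hab _))
        (ENNReal.div_le_div_right (ENNReal.div_le_div_right hab _) _)
    · intro a ha
      refine psiAux_pos hq (hpos _ (ENNReal.div_pos ha.ne' ?_)) ?_
      · exact ENNReal.mul_ne_top (by simp) hLtop
      · exact ENNReal.div_pos (ENNReal.div_pos ha.ne' (by simp)).ne' hVtop
    · intro g hg hg1 hg0
      -- slices
      set G : ℝ → (Fin n → ℝ) → ℝ≥0∞ := fun t' x => g (Fin.snoc x t') with hGdef
      have hGmeas : ∀ t', Measurable (G t') := fun t' => hg.comp measurable_snoc_fst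
      have hG0 : ∀ t' x, x ∉ cube0 n t → G t' x = 0 := by
        intro t' x hx
        exact hg0 _ (fun hc => hx (snoc_mem_cube.mp hc).1)
      have hG0' : ∀ t', t' ∉ Icc (-t) t → ∀ x, G t' x = 0 := by
        intro t' ht' x
        refine hg0 _ (fun hc => ht' ?_)
        have := (snoc_mem_cube.mp hc).2
        exact abs_le.mp this |>.imp neg_le.mp id |> fun h => ⟨(abs_le.mp this).1, (abs_le.mp this).2⟩
      set A : ℝ → ℝ≥0∞ := fun t' => ∫⁻ x, G t' x with hAdef
      have hAmeas : Measurable A := by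
        have hjoint : Measurable (fun z : ℝ × (Fin n → ℝ) => g ((eLast n).symm z)) :=
          hg.comp (eLast n).symm.measurable
        have : (fun z : ℝ × (Fin n → ℝ) => G z.1 z.2) =
            fun z : ℝ × (Fin n → ℝ) => g ((eLast n).symm z) := by
          funext z; rw [eLast_symm_apply]
        exact Measurable.lintegral_prod_right (f := fun a b => G a b) (by rw [← this] at hjoint; exact hjoint)
      have hAV : ∀ t', A t' ≤ V := by
        intro t'
        calc A t' ≤ ∫⁻ x, (cube0 n t).indicator (fun _ => 1) x := by
              refine lintegral_mono fun x => ?_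
              by_cases hx : x ∈ cube0 n t
              · simpa [Set.indicator_of_mem hx] using hg1 (Fin.snoc x t')
              · simp [Set.indicator_of_notMem hx, hG0 t' x hx]
          _ = V := by rw [lintegral_indicator_const (measurableSet_cube0 n t), one_mul]
      have hA0 : ∀ t', t' ∉ Icc (-t) t → A t' = 0 := by
        intro t' ht'
        have : A t' = ∫⁻ x, 0 := lintegral_congr fun x => hG0' t' ht' x
        simpa using this
      set S : ℝ≥0∞ := ∫⁻ y, g y with hSdef
      have hSA : S = ∫⁻ t', A t' := lintegral_snoc hg
      by_cases hS0 : S = 0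
      · rw [hS0]
        simp only [ENNReal.zero_div]
        rw [psiAux_zero hq]
        exact zero_le
      -- S positive
      have hSfin : S ≠ ∞ := by
        rw [hSA]
        have hb : ∀ t', A t' ≤ (Icc (-t) t).indicator (fun _ => V) t' := by
          intro t'
          by_cases ht' : t' ∈ Icc (-t) t
          · simpa [Set.indicator_of_mem ht'] using hAV t'
          · simp [Set.indicator_of_notMem ht', hA0 t' ht']
        have hmo := lintegral_mono (μ := volume) hb
        rw [lintegral_indicator_const measurableSet_Icc] at hmo
        refine ne_top_of_le_ne_top ?_ hmo
        exact ENNReal.mul_ne_top hVtop (by simp [Real.volume_Icc])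
      set s' : ℝ≥0∞ := S / (2 * L) with hs'def
      set T : Set ℝ := Icc (-t) t ∩ {t' | s' ≤ A t'} with hTdef
      have hTmeas : MeasurableSet T :=
        measurableSet_Icc.inter (hAmeas measurableSet_Ici)
      have hmarkov : S ≤ S / 2 + V * volume T := by
        have hb : ∀ t', A t' ≤ (Icc (-t) t).indicator (fun _ => s') t'
            + T.indicator (fun _ => V) t' := by
          intro t'
          by_cases ht' : t' ∈ Icc (-t) t
          · by_cases hst : s' ≤ A t'
            · have hT : t' ∈ T := ⟨ht', hst⟩
              calc A t' ≤ V := hAV t'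
                _ ≤ _ := by simp [Set.indicator_of_mem ht', Set.indicator_of_mem hT]
            · push_neg at hst
              calc A t' ≤ s' := hst.le
                _ ≤ _ := by simp [Set.indicator_of_mem ht']
          · simp [hA0 t' ht']
        have h1 : S ≤ s' * L + V * volume T := by
          rw [hSA]
          calc ∫⁻ t', A t' ≤ ∫⁻ t', ((Icc (-t) t).indicator (fun _ => s') t'
              + T.indicator (fun _ => V) t') := lintegral_mono hb
            _ = s' * L + V * volume T := by
              rw [lintegral_add_left ((measurable_const).indicator measurableSet_Icc),
                lintegral_indicator_const measurableSet_Icc,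
                lintegral_indicator_const hTmeas]
              congr 2
              simp [hLdef, Real.volume_Icc]; ring_nf; rw [ENNReal.ofReal_mul' (by norm_num), ENNReal.ofReal_ofNat]
        have h2 : s' * L ≤ S / 2 := by
          rw [hs'def]
          rw [ENNReal.div_eq_inv_mul, ENNReal.mul_inv (Or.inl (by simp)) (Or.inl (by simp)),
            ENNReal.div_eq_inv_mul]
          refine le_of_eq ?_
          calc 2⁻¹ * L⁻¹ * S * L = 2⁻¹ * S * (L⁻¹ * L) := by ring
            _ = 2⁻¹ * S := by rw [ENNReal.inv_mul_cancel hL0 hLtop, mul_one]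
        exact h1.trans (add_le_add_left h2 _)
      have hμT : S / 2 / V ≤ volume T := by
        have h3 : S / 2 ≤ V * volume T := by
          have := tsub_le_iff_left.mpr hmarkov
          rwa [ENNReal.sub_half hSfin] at this
        rw [ENNReal.div_le_iff hV0 hVtop]
        rwa [mul_comm]
      -- conclude
      have hlow : ∀ t' ∈ T, Φn s' ≤ mixedNorm n (fun i => p i.castSucc) (G t') := by
        intro t' ht'
        calc Φn s' ≤ Φn (A t') := hmono ht'.2
          _ ≤ _ := hΦ (G t') (hGmeas t') (fun x => hg1 _) (hG0 t')
      have hfinal := psiAux_le_lpNormE hq volume hTmeas hlow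
      simp only [mixedNorm]
      refine le_trans (psiAux_mono ?_ hμT) hfinal
      exact le_rfl

end LMM3

namespace LMM4
open LMM LMM2 LMM3

lemma lpNormE_const_mul {q : ℝ≥0∞} (hq : 0 < q) (c : ℝ≥0∞) {h : ℝ → ℝ≥0∞}
    (hh : Measurable h) (μ : Measure ℝ) :
    lpNormE q (fun r => c * h r) μ = c * lpNormE q h μ := by
  unfold lpNormE
  split
  · exact ENNReal.essSup_const_mul
  · rename_i hqt
    have he : 0 < q.toReal := ENNReal.toReal_pos hq.ne' hqt
    have hpt : ∀ r, (c * h r) ^ q.toReal = c ^ q.toReal * h r ^ q.toReal := fun r =>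
      ENNReal.mul_rpow_of_nonneg _ _ he.le
    simp_rw [hpt]
    rw [lintegral_const_mul _ (hh.pow_const _)]
    rw [ENNReal.mul_rpow_of_nonneg _ _ (by positivity), ← ENNReal.rpow_mul, mul_one_div,
      div_self he.ne', ENNReal.rpow_one]

lemma cube0_mono {n : ℕ} {t r : ℝ} (h : t ≤ r) : cube0 n t ⊆ cube0 n r :=
  fun x hx i => le_trans (hx i) h

theorem statement0' (n : ℕ) (p : Fin n → ℝ≥0∞) (θ : ℝ≥0∞) (w : ℝ → ℝ)
    (hp : ∀ i, 0 < p i) (hθ : 0 < θ)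
    (hwm : Measurable w) (hw0 : ∀ r, 0 ≤ w r)
    (hinf : ∀ t : ℝ, 0 < t →
      lpNormE θ (fun r => ENNReal.ofReal (w r)) (volume.restrict (Ioi t)) = ∞) :
    ∀ f : (Fin n → ℝ) → ℝ, LocallyIntegrable f →
      LMnorm n p θ w f < ∞ → f =ᵐ[volume] 0 := by
  intro f hfi hfLM
  by_contra hne
  have hfa : AEStronglyMeasurable f volume := hfi.aestronglyMeasurable
  set f' : (Fin n → ℝ) → ℝ := hfa.mk f with hf'def
  have hf'm : Measurable f' := hfa.stronglyMeasurable_mk.measurable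
  have hff' : f =ᵐ[volume] f' := hfa.ae_eq_mk
  have hne' : ¬ f' =ᵐ[volume] (0 : (Fin n → ℝ) → ℝ) := fun h => hne (hff'.trans h)
  have hμs : volume {x | f' x ≠ 0} ≠ 0 := fun h0 => hne' (ae_iff.mpr h0)
  have hcube : ∃ k : ℕ, volume ({x | f' x ≠ 0} ∩ cube0 n ((k : ℝ) + 1)) ≠ 0 := by
    by_contra hall
    push_neg at hall
    have hcover : {x | f' x ≠ 0} ⊆ ⋃ k : ℕ, ({x | f' x ≠ 0} ∩ cube0 n ((k : ℝ) + 1)) := by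
      intro x hx
      obtain ⟨k, hk⟩ := exists_nat_ge (∑ i, |x i|)
      refine Set.mem_iUnion.mpr ⟨k, hx, fun i => ?_⟩
      simp only [Pi.zero_apply, sub_zero]
      calc |x i| ≤ ∑ j, |x j| :=
            Finset.single_le_sum (fun j _ => abs_nonneg (x j)) (Finset.mem_univ i)
        _ ≤ k := hk
        _ ≤ k + 1 := by linarith
    exact hμs (measure_mono_null hcover (measure_iUnion_null fun k => hall k))
  obtain ⟨k, hk⟩ := hcube
  set t₀ : ℝ := (k : ℝ) + 1 with ht₀def
  have ht₀ : 0 < t₀ := by positivity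
  set g : (Fin n → ℝ) → ℝ≥0∞ :=
    (cube0 n t₀).indicator (fun x => min (‖f' x‖₊ : ℝ≥0∞) 1) with hgdef
  have hgm : Measurable g :=
    ((measurable_coe_nnreal_ennreal.comp hf'm.nnnorm).min measurable_const).indicator
      (measurableSet_cube0 n t₀)
  have hg1 : ∀ x, g x ≤ 1 := by
    intro x
    by_cases hx : x ∈ cube0 n t₀
    · simp [hgdef, Set.indicator_of_mem hx]
    · simp [hgdef, Set.indicator_of_notMem hx]
  have hg0 : ∀ x, x ∉ cube0 n t₀ → g x = 0 := fun x hx => Set.indicator_of_notMem hx _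
  have ha₀ : 0 < ∫⁻ x, g x := by
    rcases (zero_le : 0 ≤ ∫⁻ x, g x).lt_or_eq with h | h
    · exact h
    refine absurd ?_ hk
    have hz : g =ᵐ[volume] 0 := (lintegral_eq_zero_iff hgm).mp h.symm
    refine measure_mono_null ?_ (ae_iff.mp hz)
    rintro x ⟨hxs, hxc⟩
    simp only [Set.mem_setOf_eq, hgdef, Set.indicator_of_mem hxc, Pi.zero_apply]
    simp only [Set.mem_setOf_eq] at hxs
    simp [lt_min_iff, pos_iff_ne_zero, hxs, min_eq_iff]
  obtain ⟨Φ, hΦmono, hΦpos, hΦ⟩ := key t₀ ht₀ n p hp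
  set c : ℝ≥0∞ := Φ (∫⁻ x, g x) with hcdef
  have hc : 0 < c := hΦpos _ ha₀
  have hMN : ∀ r : ℝ, r ∈ Ioi t₀ →
      c ≤ mixedNormOn n p (fun x => (‖f x‖₊ : ℝ≥0∞)) (cube0 n r) := by
    intro r hr
    refine le_trans (hΦ g hgm hg1 hg0) ?_
    unfold mixedNormOn
    refine mixedNorm_mono_ae n p ?_
    filter_upwards [hff'] with x hx
    by_cases hxc : x ∈ cube0 n t₀
    · have hxr : x ∈ cube0 n r := cube0_mono (le_of_lt hr) hxc
      calc g x = min (‖f' x‖₊ : ℝ≥0∞) 1 := Set.indicator_of_mem hxc _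
        _ ≤ (‖f' x‖₊ : ℝ≥0∞) := min_le_left _ _
        _ = (‖f x‖₊ : ℝ≥0∞) := by rw [hx]
        _ = (cube0 n r).indicator (fun x => (‖f x‖₊ : ℝ≥0∞)) x :=
            (Set.indicator_of_mem hxr (fun x => (‖f x‖₊ : ℝ≥0∞))).symm
    · rw [hg0 x hxc]
      exact zero_le
  -- the weighted norm blows up
  set W : ℝ → ℝ≥0∞ :=
    fun r => ENNReal.ofReal (w r) * mixedNormOn n p (fun x => (‖f x‖₊ : ℝ≥0∞)) (cube0 n r)
    with hWdef
  have h1 : lpNormE θ (fun r => c * ENNReal.ofReal (w r)) (volume.restrict (Ioi t₀))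
      ≤ lpNormE θ W (volume.restrict (Ioi t₀)) := by
    refine lpNormE_mono_ae ?_
    refine (ae_restrict_iff' measurableSet_Ioi).mpr (ae_of_all _ fun r hr => ?_)
    show c * ENNReal.ofReal (w r)
        ≤ ENNReal.ofReal (w r) * mixedNormOn n p (fun x => (‖f x‖₊ : ℝ≥0∞)) (cube0 n r)
    rw [mul_comm c _]
    exact mul_le_mul_right (hMN r hr) _
  have h2 : lpNormE θ W (volume.restrict (Ioi t₀)) ≤ lpNormE θ W (volume.restrict (Ioi 0)) :=
    lpNormE_mono_measure (Measure.restrict_mono (Ioi_subset_Ioi ht₀.le) le_rfl) W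
  have h3 : lpNormE θ (fun r => c * ENNReal.ofReal (w r)) (volume.restrict (Ioi t₀)) = ∞ := by
    rw [lpNormE_const_mul hθ c (hwm.ennreal_ofReal) _, hinf t₀ ht₀]
    exact ENNReal.mul_top hc.ne'
  have hLM : LMnorm n p θ w f = lpNormE θ W (volume.restrict (Ioi 0)) := rfl
  rw [hLM] at hfLM
  exact hfLM.ne (top_le_iff.mp (h3 ▸ (h1.trans h2)))

end LMM4

open LMM

/-- if `‖w‖_{L^θ(t,∞)} = ∞` for all `t > 0`, then `LM_{pθ,w}` is trivial. -/
theorem statement0 (n : ℕ) (p : Fin n → ℝ≥0∞) (θ : ℝ≥0∞) (w : ℝ → ℝ)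
    (hp : ∀ i, 0 < p i) (hθ : 0 < θ)
    (hwm : Measurable w) (hw0 : ∀ r, 0 ≤ w r)
    (hinf : ∀ t : ℝ, 0 < t →
      lpNormE θ (fun r => ENNReal.ofReal (w r)) (volume.restrict (Ioi t)) = ∞) :
    ∀ f : (Fin n → ℝ) → ℝ, LocallyIntegrable f →
      LMnorm n p θ w f < ∞ → f =ᵐ[volume] 0 := by
  exact LMM4.statement0' n p θ w hp hθ hwm hw0 hinf
end
end

section
/- Let 0 < p⃗, θ ≤ ∞ and let w be a non-negative measurable function on (0,∞). If ‖w(r)·r^{1/p_1+⋯+1/p_n}‖_{L^θ(0,t)} = ∞ for every t > 0, then every f ∈ LM_{p⃗θ,w}(ℝ^n) that is continuous at the origin satisfies f(0) = 0. -/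
open MeasureTheory ENNReal NNReal Set Filter

noncomputable section

namespace LMM

-- aux lemmas
lemma lpNormE_mono_ae_s1 {p : ℝ≥0∞} {g h : ℝ → ℝ≥0∞} {μ : Measure ℝ}
    (hgh : ∀ᵐ t ∂μ, g t ≤ h t) : lpNormE p g μ ≤ lpNormE p h μ := by
  unfold lpNormE
  split
  · exact essSup_mono_ae hgh
  · refine ENNReal.rpow_le_rpow ?_ (by positivity)
    exact lintegral_mono_ae (hgh.mono fun t ht => ENNReal.rpow_le_rpow ht ENNReal.toReal_nonneg)

lemma lpNormE_mono_restrict {p : ℝ≥0∞} {g : ℝ → ℝ≥0∞} {S T : Set ℝ} (hST : S ⊆ T) :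
    lpNormE p g (volume.restrict S) ≤ lpNormE p g (volume.restrict T) := by
  unfold lpNormE
  split
  · exact essSup_mono_measure (Measure.absolutelyContinuous_of_le (Measure.restrict_mono hST le_rfl))
  · exact ENNReal.rpow_le_rpow
      (lintegral_mono' (Measure.restrict_mono hST le_rfl) le_rfl) (by positivity)

lemma lpNormE_const_mul {p : ℝ≥0∞} (hp : 0 < p) {c : ℝ≥0∞} (hc : c ≠ ∞)
    (g : ℝ → ℝ≥0∞) (μ : Measure ℝ) :
    lpNormE p (fun t => c * g t) μ = c * lpNormE p g μ := by
  unfold lpNormE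
  split
  · exact ENNReal.essSup_const_mul
  · rename_i hptop
    have ha : 0 < p.toReal := ENNReal.toReal_pos hp.ne' hptop
    have h1 : ∀ t, (c * g t) ^ p.toReal = c ^ p.toReal * g t ^ p.toReal := fun t =>
      ENNReal.mul_rpow_of_nonneg _ _ ha.le
    simp_rw [h1]
    rw [lintegral_const_mul' _ _ (ENNReal.rpow_ne_top_of_nonneg ha.le hc),
      ENNReal.mul_rpow_of_nonneg _ _ (by positivity : (0:ℝ) ≤ 1 / p.toReal),
      ← ENNReal.rpow_mul, mul_one_div_cancel ha.ne', ENNReal.rpow_one]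

lemma mixedNorm_mono {n : ℕ} {p : Fin n → ℝ≥0∞} {g h : (Fin n → ℝ) → ℝ≥0∞}
    (hgh : ∀ x, g x ≤ h x) : mixedNorm n p g ≤ mixedNorm n p h := by
  induction n with
  | zero => exact hgh _
  | succ n ih =>
    exact lpNormE_mono_ae_s1 (Eventually.of_forall fun t => ih fun x => hgh _)

lemma rpow_finset_sum {ι : Type*} (x : ℝ≥0∞) (hx0 : x ≠ 0) (hxt : x ≠ ∞)
    (s : Finset ι) (a : ι → ℝ) : x ^ (∑ i ∈ s, a i) = ∏ i ∈ s, x ^ a i := by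
  classical
  induction s using Finset.induction with
  | empty => simp
  | insert _ _ hi ih =>
    rw [Finset.sum_insert hi, Finset.prod_insert hi, ENNReal.rpow_add _ _ hx0 hxt, ih]

lemma lpNormE_indicator_const_ge {q : ℝ≥0∞} (hq : 0 < q) (M : ℝ≥0∞) {s : ℝ} (hs : 0 < s) :
    M * ENNReal.ofReal (2 * s) ^ (q⁻¹).toReal ≤
      lpNormE q ((Icc (-s) s).indicator fun _ => M) volume := by
  unfold lpNormE
  split
  · rename_i hqt
    subst hqt
    simp only [ENNReal.inv_top, ENNReal.toReal_zero, ENNReal.rpow_zero, mul_one]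
    calc M = essSup (fun _ : ℝ => M) (volume.restrict (Icc (-s) s)) := by
            rw [essSup_const]
            rw [Ne, Measure.restrict_eq_zero, Real.volume_Icc]
            exact (ENNReal.ofReal_pos.2 (by linarith)).ne'
      _ = essSup ((Icc (-s) s).indicator fun _ => M) (volume.restrict (Icc (-s) s)) := by
            refine essSup_congr_ae ?_
            filter_upwards [ae_restrict_mem measurableSet_Icc] with t ht
            rw [Set.indicator_of_mem ht]
      _ ≤ essSup ((Icc (-s) s).indicator fun _ => M) volume :=
            essSup_mono_measure (Measure.absolutelyContinuous_of_le Measure.restrict_le_self)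
  · rename_i hqt
    have ha : 0 < q.toReal := ENNReal.toReal_pos hq.ne' hqt
    have h1 : ∀ t : ℝ, ((Icc (-s) s).indicator (fun _ => M) t) ^ q.toReal
        = (Icc (-s) s).indicator (fun _ => M ^ q.toReal) t := by
      intro t
      by_cases ht : t ∈ Icc (-s) s
      · simp [Set.indicator_of_mem ht]
      · simp [Set.indicator_of_notMem ht, ENNReal.zero_rpow_of_pos ha]
    simp_rw [h1]
    rw [lintegral_indicator measurableSet_Icc, setLIntegral_const, Real.volume_Icc,
      (by ring : s - -s = 2 * s),
      ENNReal.mul_rpow_of_nonneg _ _ (by positivity : (0:ℝ) ≤ 1 / q.toReal),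
      ← ENNReal.rpow_mul, mul_one_div_cancel ha.ne', ENNReal.rpow_one,
      ENNReal.toReal_inv, one_div]

lemma mixedNorm_indicator_cube_ge {n : ℕ} {p : Fin n → ℝ≥0∞} (hp : ∀ i, 0 < p i)
    (c : ℝ≥0∞) {s : ℝ} (hs : 0 < s) :
    c * ∏ i, ENNReal.ofReal (2 * s) ^ ((p i)⁻¹).toReal ≤
      mixedNorm n p ((cube0 n s).indicator fun _ => c) := by
  induction n with
  | zero =>
    have : (![] : Fin 0 → ℝ) ∈ cube0 0 s := fun i => i.elim0
    simp [mixedNorm, Set.indicator_of_mem this]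
  | succ n ih =>
    set M : ℝ≥0∞ := c * ∏ i : Fin n, ENNReal.ofReal (2 * s) ^ ((p i.castSucc)⁻¹).toReal with hM
    have key : ∀ t : ℝ,
        (Icc (-s) s).indicator (fun _ => M) t ≤
          mixedNorm n (fun i => p i.castSucc)
            (fun x => ((cube0 (n+1) s).indicator (fun _ => c)) (Fin.snoc x t)) := by
      intro t
      by_cases ht : t ∈ Icc (-s) s
      · rw [Set.indicator_of_mem ht]
        have heq : (fun x : Fin n → ℝ =>
            ((cube0 (n+1) s).indicator (fun _ => c)) (Fin.snoc x t)) =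
            (cube0 n s).indicator (fun _ => c) := by
          funext x
          have hmem : Fin.snoc x t ∈ cube0 (n+1) s ↔ x ∈ cube0 n s := by
            constructor
            · intro h i
              have := h i.castSucc
              simpa [cube0, cubeAt, Fin.snoc_castSucc] using this
            · intro h i
              refine Fin.lastCases ?_ ?_ i
              · simpa [cube0, cubeAt, Fin.snoc_last, abs_le] using ht
              · intro j
                have := h j
                simpa [cube0, cubeAt, Fin.snoc_castSucc] using this
          by_cases hx : x ∈ cube0 n s
          · rw [Set.indicator_of_mem (hmem.2 hx), Set.indicator_of_mem hx]
          · rw [Set.indicator_of_notMem (fun h => hx (hmem.1 h)), Set.indicator_of_notMem hx]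
        rw [heq]
        exact ih (fun i => hp _)
      · simp [Set.indicator_of_notMem ht]
    calc c * ∏ i : Fin (n+1), ENNReal.ofReal (2 * s) ^ ((p i)⁻¹).toReal
        = M * ENNReal.ofReal (2 * s) ^ ((p (Fin.last n))⁻¹).toReal := by
          rw [hM, Fin.prod_univ_castSucc, mul_assoc]
      _ ≤ lpNormE (p (Fin.last n)) ((Icc (-s) s).indicator fun _ => M) volume :=
          lpNormE_indicator_const_ge (hp _) M hs
      _ ≤ mixedNorm (n+1) p ((cube0 (n+1) s).indicator fun _ => c) :=
          lpNormE_mono_ae_s1 (Eventually.of_forall key)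


end LMM

open LMM

/-- if `‖w(r) r^{Σ 1/pᵢ}‖_{L^θ(0,t)} = ∞` for all `t > 0`, then every
`f ∈ LM_{pθ,w}` continuous at the origin vanishes at the origin. -/
theorem statement1 (n : ℕ) (p : Fin n → ℝ≥0∞) (θ : ℝ≥0∞) (w : ℝ → ℝ)
    (hp : ∀ i, 0 < p i) (hθ : 0 < θ)
    (hwm : Measurable w) (hw0 : ∀ r, 0 ≤ w r)
    (hinf : ∀ t : ℝ, 0 < t →
      lpNormE θ (fun r => ENNReal.ofReal (w r * r ^ sumInv p))
        (volume.restrict (Ioo 0 t)) = ∞) :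
    ∀ f : (Fin n → ℝ) → ℝ, LocallyIntegrable f → LMnorm n p θ w f < ∞ →
      ContinuousAt f 0 → f 0 = 0 := by
  intro f hloc hLM hcont
  by_contra hne
  set c : ℝ := |f 0| / 2 with hc
  have hc0 : 0 < c := by
    have : 0 < |f 0| := abs_pos.2 hne
    positivity
  obtain ⟨ε, hε, hball⟩ := Metric.continuousAt_iff.1 hcont c hc0
  set δ : ℝ := ε / 2 with hδdef
  have hδ : 0 < δ := by positivity
  have hsum0 : 0 ≤ sumInv p := Finset.sum_nonneg fun i _ => ENNReal.toReal_nonneg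
  have hcube : ∀ x ∈ cube0 n δ, ENNReal.ofReal c ≤ (‖f x‖₊ : ℝ≥0∞) := by
    intro x hx
    have hdist : dist x 0 < ε := by
      rw [dist_pi_lt_iff hε]
      intro i
      have h : |x i| ≤ δ := by simpa using hx i
      rw [Real.dist_eq]
      simp only [Pi.zero_apply, sub_zero]
      linarith
    have h1 : dist (f x) (f 0) < c := hball hdist
    rw [Real.dist_eq] at h1
    have h2 : c ≤ |f x| := by
      have h3 := abs_sub_abs_le_abs_sub (f 0) (f x)
      rw [abs_sub_comm] at h3
      have : |f 0| = 2 * c := by rw [hc]; ring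
      linarith
    calc ENNReal.ofReal c ≤ ENNReal.ofReal |f x| := ENNReal.ofReal_le_ofReal h2
      _ = (‖f x‖₊ : ℝ≥0∞) := by rw [← Real.norm_eq_abs, ofReal_norm, enorm_eq_nnnorm]
  have hpt : ∀ r ∈ Ioo (0:ℝ) δ,
      ENNReal.ofReal c * ENNReal.ofReal (w r * r ^ sumInv p) ≤
        ENNReal.ofReal (w r) * mixedNormOn n p (fun x => (‖f x‖₊ : ℝ≥0∞)) (cube0 n r) := by
    intro r hr
    have hr0 : 0 < r := hr.1
    have hbig : ENNReal.ofReal c * ENNReal.ofReal (r ^ sumInv p) ≤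
        mixedNormOn n p (fun x => (‖f x‖₊ : ℝ≥0∞)) (cube0 n r) := by
      have h20 : ENNReal.ofReal (2 * r) ≠ 0 := (ENNReal.ofReal_pos.2 (by linarith)).ne'
      calc ENNReal.ofReal c * ENNReal.ofReal (r ^ sumInv p)
          = ENNReal.ofReal c * ENNReal.ofReal r ^ sumInv p := by
            rw [ENNReal.ofReal_rpow_of_pos hr0]
        _ ≤ ENNReal.ofReal c * ENNReal.ofReal (2 * r) ^ sumInv p := by
            exact mul_le_mul_right
              (ENNReal.rpow_le_rpow (ENNReal.ofReal_le_ofReal (by linarith)) hsum0) _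
        _ = ENNReal.ofReal c * ∏ i, ENNReal.ofReal (2 * r) ^ ((p i)⁻¹).toReal := by
            rw [sumInv, rpow_finset_sum _ h20 ENNReal.ofReal_ne_top]
        _ ≤ mixedNorm n p ((cube0 n r).indicator fun _ => ENNReal.ofReal c) :=
            mixedNorm_indicator_cube_ge hp _ hr0
        _ ≤ mixedNorm n p ((cube0 n r).indicator fun x => (‖f x‖₊ : ℝ≥0∞)) := by
            refine mixedNorm_mono fun x => ?_
            by_cases hx : x ∈ cube0 n r
            · rw [Set.indicator_of_mem hx, Set.indicator_of_mem hx]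
              refine hcube x fun i => le_trans (hx i) hr.2.le
            · rw [Set.indicator_of_notMem hx, Set.indicator_of_notMem hx]
        _ = mixedNormOn n p (fun x => (‖f x‖₊ : ℝ≥0∞)) (cube0 n r) := rfl
    calc ENNReal.ofReal c * ENNReal.ofReal (w r * r ^ sumInv p)
        = ENNReal.ofReal (w r) * (ENNReal.ofReal c * ENNReal.ofReal (r ^ sumInv p)) := by
          rw [ENNReal.ofReal_mul (hw0 r)]; ring
      _ ≤ ENNReal.ofReal (w r) * mixedNormOn n p (fun x => (‖f x‖₊ : ℝ≥0∞)) (cube0 n r) :=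
          mul_le_mul_right hbig _
  have chain : (∞ : ℝ≥0∞) ≤ LMnorm n p θ w f := by
    calc (∞ : ℝ≥0∞)
        = ENNReal.ofReal c * lpNormE θ (fun r => ENNReal.ofReal (w r * r ^ sumInv p))
            (volume.restrict (Ioo 0 δ)) := by
          rw [hinf δ hδ, ENNReal.mul_top (ENNReal.ofReal_pos.2 hc0).ne']
      _ = lpNormE θ (fun r => ENNReal.ofReal c * ENNReal.ofReal (w r * r ^ sumInv p))
            (volume.restrict (Ioo 0 δ)) := (lpNormE_const_mul hθ ENNReal.ofReal_ne_top _ _).symm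
      _ ≤ lpNormE θ (fun r => ENNReal.ofReal (w r) *
            mixedNormOn n p (fun x => (‖f x‖₊ : ℝ≥0∞)) (cube0 n r))
            (volume.restrict (Ioo 0 δ)) := by
          refine lpNormE_mono_ae_s1 ?_
          filter_upwards [ae_restrict_mem measurableSet_Ioo] with r hr using hpt r hr
      _ ≤ lpNormE θ (fun r => ENNReal.ofReal (w r) *
            mixedNormOn n p (fun x => (‖f x‖₊ : ℝ≥0∞)) (cube0 n r))
            (volume.restrict (Ioi 0)) := lpNormE_mono_restrict Ioo_subset_Ioi_self
      _ = LMnorm n p θ w f := rfl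
  exact lt_irrefl _ (lt_of_le_of_lt chain hLM)
end
end
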